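/- (Lemma 1, divergence part.) Suppose H has no zero rows (for every i there is j with h_{ij} > 0) and there are no phantom types (for every j there is n ≥ 0 with (g H^n)_j > 0). If s > 0 satisfies m f(s) ≥ 1 (including the case f(s) = ∞), then Σ_{n≥0} s^n (M^n)_{ij} = ∞ for every pair i,j. -/

import Mathlib

open scoped ENNReal BigOperators
open Filter Topology

/-- Entrywise product of countable nonnegative matrices. -/
noncomputable def matmul (A B : ℕ → ℕ → ℝ≥0∞) : ℕ → ℕ → ℝ≥0∞ :=
  fun i j => ∑' k, A i k * B k j

/-- Entrywise powers of a countable nonnegative matrix (`matpow A 0 = I`). -/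
noncomputable def matpow (A : ℕ → ℕ → ℝ≥0∞) : ℕ → ℕ → ℕ → ℝ≥0∞
  | 0 => fun i j => if i = j then 1 else 0
  | n + 1 => matmul A (matpow A n)

/-- The mean matrix `M = H + m H 1ᵗ g`, i.e. `m_{ij} = h_{ij} + m (Σ_l h_{il}) g_j`. -/
noncomputable def meanM (H : ℕ → ℕ → ℝ≥0∞) (g : ℕ → ℝ≥0∞) (m : ℝ≥0∞) : ℕ → ℕ → ℝ≥0∞ :=
  fun i j => H i j + m * (∑' l, H i l) * g j

/-- `d_n = g H^n 1ᵗ`. -/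
noncomputable def dseq (H : ℕ → ℕ → ℝ≥0∞) (g : ℕ → ℝ≥0∞) (n : ℕ) : ℝ≥0∞ :=
  ∑' i, g i * ∑' j, matpow H n i j

/-- `f(s) = Σ_{n≥1} d_n s^n`. -/
noncomputable def fgen (H : ℕ → ℕ → ℝ≥0∞) (g : ℕ → ℝ≥0∞) (s : ℝ≥0∞) : ℝ≥0∞ :=
  ∑' n : ℕ, dseq H g (n + 1) * s ^ (n + 1)

/-! ### Auxiliary matrix lemmas -/

lemma matpow_succ (A : ℕ → ℕ → ℝ≥0∞) (n i j : ℕ) :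
    matpow A (n+1) i j = ∑' k, A i k * matpow A n k j := rfl

lemma matpow_zero (A : ℕ → ℕ → ℝ≥0∞) (i j : ℕ) :
    matpow A 0 i j = if i = j then 1 else 0 := rfl

lemma matpow_one (A : ℕ → ℕ → ℝ≥0∞) (i j : ℕ) : matpow A 1 i j = A i j := by
  rw [matpow_succ]
  rw [tsum_eq_single j]
  · simp [matpow_zero]
  · intro k hk
    simp [matpow_zero, hk]

lemma matpow_succ_rowsum (A : ℕ → ℕ → ℝ≥0∞) (n i : ℕ) :
    ∑' j, matpow A (n+1) i j = ∑' k, A i k * ∑' j, matpow A n k j := by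
  simp only [matpow_succ]
  rw [ENNReal.tsum_comm]
  exact tsum_congr fun k => ENNReal.tsum_mul_left

lemma matpow_add (A : ℕ → ℕ → ℝ≥0∞) (a b : ℕ) (i j : ℕ) :
    matpow A (a + b) i j = ∑' k, matpow A a i k * matpow A b k j := by
  induction a generalizing i with
  | zero =>
    simp only [Nat.zero_add]
    rw [tsum_eq_single i]
    · simp [matpow_zero]
    · intro k hk
      simp [matpow_zero, Ne.symm hk]
  | succ a ih =>
    have h : a + 1 + b = (a + b) + 1 := by omega
    rw [h, matpow_succ]
    have : ∀ k, A i k * matpow A (a + b) k j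
        = ∑' l, A i k * (matpow A a k l * matpow A b l j) := by
      intro k
      rw [ENNReal.tsum_mul_left, ← ih k]
    rw [tsum_congr this, ENNReal.tsum_comm]
    refine tsum_congr fun l => ?_
    calc ∑' k, A i k * (matpow A a k l * matpow A b l j)
        = ∑' k, (A i k * matpow A a k l) * matpow A b l j :=
          tsum_congr fun k => (mul_assoc _ _ _).symm
      _ = (∑' k, A i k * matpow A a k l) * matpow A b l j := ENNReal.tsum_mul_right
      _ = matpow A (a+1) i l * matpow A b l j := by rw [matpow_succ]

lemma matpow_mono {A B : ℕ → ℕ → ℝ≥0∞} (hAB : ∀ i j, A i j ≤ B i j) (n : ℕ) :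
    ∀ i j, matpow A n i j ≤ matpow B n i j := by
  induction n with
  | zero => intro i j; simp [matpow_zero]
  | succ n ih =>
    intro i j
    rw [matpow_succ, matpow_succ]
    exact ENNReal.tsum_le_tsum fun k => mul_le_mul' (hAB i k) (ih k j)

/-! ### The scalar sequences -/

noncomputable def vseq (H : ℕ → ℕ → ℝ≥0∞) (g : ℕ → ℝ≥0∞) (m : ℝ≥0∞) (n i : ℕ) : ℝ≥0∞ :=
  ∑' j, matpow (meanM H g m) n i j

noncomputable def eseq (H : ℕ → ℕ → ℝ≥0∞) (n i : ℕ) : ℝ≥0∞ :=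
  ∑' j, matpow H n i j

noncomputable def useq (H : ℕ → ℕ → ℝ≥0∞) (g : ℕ → ℝ≥0∞) (m : ℝ≥0∞) (n : ℕ) : ℝ≥0∞ :=
  ∑' i, g i * vseq H g m n i

lemma dseq_eq (H : ℕ → ℕ → ℝ≥0∞) (g : ℕ → ℝ≥0∞) (n : ℕ) :
    dseq H g n = ∑' i, g i * eseq H n i := rfl

lemma eseq_succ (H : ℕ → ℕ → ℝ≥0∞) (r i : ℕ) :
    eseq H (r+1) i = ∑' k, H i k * eseq H r k := matpow_succ_rowsum H r i

lemma rowsum_zero (A : ℕ → ℕ → ℝ≥0∞) (i : ℕ) : (∑' j, matpow A 0 i j) = 1 := by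
  rw [tsum_eq_single i]
  · simp [matpow_zero]
  · intro k hk
    simp [matpow_zero, Ne.symm hk]

lemma useq_zero (H : ℕ → ℕ → ℝ≥0∞) (g : ℕ → ℝ≥0∞) (m : ℝ≥0∞) (hg : ∑' j, g j = 1) :
    useq H g m 0 = 1 := by
  unfold useq vseq
  simp only [rowsum_zero, mul_one]
  exact hg

lemma vseq_succ (H : ℕ → ℕ → ℝ≥0∞) (g : ℕ → ℝ≥0∞) (m : ℝ≥0∞) (n i : ℕ) :
    vseq H g m (n+1) i
      = (∑' k, H i k * vseq H g m n k) + m * (∑' l, H i l) * useq H g m n := by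
  unfold vseq
  rw [matpow_succ_rowsum]
  have h1 : ∀ k, meanM H g m i k * (∑' j, matpow (meanM H g m) n k j)
      = H i k * (∑' j, matpow (meanM H g m) n k j)
        + (m * (∑' l, H i l)) * (g k * (∑' j, matpow (meanM H g m) n k j)) := by
    intro k
    simp only [meanM]
    ring
  rw [tsum_congr h1, ENNReal.tsum_add, ENNReal.tsum_mul_left]
  rfl

lemma vseq_lower (H : ℕ → ℕ → ℝ≥0∞) (g : ℕ → ℝ≥0∞) (m : ℝ≥0∞) (n i : ℕ) :
    (∑ k ∈ Finset.range n, m * eseq H (k+1) i * useq H g m (n-1-k)) ≤ vseq H g m n i := by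
  induction n generalizing i with
  | zero => simp
  | succ n ih =>
    rw [vseq_succ]
    rw [Finset.sum_range_succ']
    refine add_le_add ?_ ?_
    · -- shifted part
      have h2 : ∀ k ∈ Finset.range n,
          m * eseq H (k+1+1) i * useq H g m (n+1-1-(k+1))
            = ∑' l, H i l * (m * eseq H (k+1) l * useq H g m (n-1-k)) := by
        intro k hk
        have hn : n+1-1-(k+1) = n-1-k := by omega
        rw [hn, eseq_succ]
        calc (m * ∑' l, H i l * eseq H (k+1) l) * useq H g m (n-1-k)
            = m * ((∑' l, H i l * eseq H (k+1) l) * useq H g m (n-1-k)) := by ring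
          _ = m * (∑' l, (H i l * eseq H (k+1) l) * useq H g m (n-1-k)) := by
              rw [ENNReal.tsum_mul_right]
          _ = ∑' l, m * ((H i l * eseq H (k+1) l) * useq H g m (n-1-k)) := by
              rw [ENNReal.tsum_mul_left]
          _ = ∑' l, H i l * (m * eseq H (k+1) l * useq H g m (n-1-k)) :=
              tsum_congr fun l => by ring
      rw [Finset.sum_congr rfl h2]
      rw [← Summable.tsum_finsetSum (fun k _ => ENNReal.summable)]
      refine ENNReal.tsum_le_tsum fun l => ?_
      rw [← Finset.mul_sum]
      exact mul_le_mul' le_rfl (ih l)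
    · -- k = 0 part
      have he : eseq H (0+1) i = ∑' l, H i l := tsum_congr fun j => matpow_one H i j
      have hn : n+1-1-0 = n := by omega
      rw [he, hn]

lemma useq_lower (H : ℕ → ℕ → ℝ≥0∞) (g : ℕ → ℝ≥0∞) (m : ℝ≥0∞) (n : ℕ) :
    (∑ k ∈ Finset.range (n+1), m * dseq H g (k+1) * useq H g m (n-k)) ≤ useq H g m (n+1) := by
  have h1 : ∀ k ∈ Finset.range (n+1),
      m * dseq H g (k+1) * useq H g m (n-k)
        = ∑' i, g i * (m * eseq H (k+1) i * useq H g m (n-k)) := by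
    intro k hk
    rw [dseq_eq]
    calc (m * ∑' i, g i * eseq H (k+1) i) * useq H g m (n-k)
        = m * ((∑' i, g i * eseq H (k+1) i) * useq H g m (n-k)) := by ring
      _ = m * (∑' i, (g i * eseq H (k+1) i) * useq H g m (n-k)) := by
          rw [ENNReal.tsum_mul_right]
      _ = ∑' i, m * ((g i * eseq H (k+1) i) * useq H g m (n-k)) := by
          rw [ENNReal.tsum_mul_left]
      _ = ∑' i, g i * (m * eseq H (k+1) i * useq H g m (n-k)) :=
          tsum_congr fun i => by ring
  rw [Finset.sum_congr rfl h1, ← Summable.tsum_finsetSum (fun k _ => ENNReal.summable)]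
  refine ENNReal.tsum_le_tsum fun i => ?_
  rw [← Finset.mul_sum]
  refine mul_le_mul' le_rfl ?_
  have := vseq_lower H g m (n+1) i
  have hn : ∀ k, n+1-1-k = n-k := fun k => by omega
  simpa only [hn] using this

lemma U_top (H : ℕ → ℕ → ℝ≥0∞) (g : ℕ → ℝ≥0∞) (m : ℝ≥0∞)
    (hg : ∑' j, g j = 1) (s : ℝ≥0∞) (hfs : 1 ≤ m * fgen H g s) :
    ∑' n : ℕ, s ^ n * useq H g m n = ⊤ := by
  by_contra hU
  set U := ∑' n : ℕ, s ^ n * useq H g m n with hUdef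
  have hU' : U ≠ ⊤ := hU
  have hsplit : U = s ^ 0 * useq H g m 0 + ∑' n : ℕ, s ^ (n+1) * useq H g m (n+1) :=
    tsum_eq_zero_add' ENNReal.summable
  set a : ℕ → ℝ≥0∞ := fun k => m * dseq H g (k+1) * s ^ (k+1) with ha
  set b : ℕ → ℝ≥0∞ := fun j => s ^ j * useq H g m j with hb
  have hab : (∑' k, a k) * (∑' j, b j) ≤ ∑' n : ℕ, s ^ (n+1) * useq H g m (n+1) := by
    set G : ℕ × ℕ → ℝ≥0∞ := fun q => if q.2 ≤ q.1 then a q.2 * b (q.1 - q.2) else 0 with hG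
    have step1 : (∑' k, a k) * (∑' j, b j) = ∑' p : ℕ × ℕ, a p.1 * b p.2 := by
      calc (∑' k, a k) * (∑' j, b j)
          = ∑' k, a k * ∑' j, b j := ENNReal.tsum_mul_right.symm
        _ = ∑' k, ∑' j, a k * b j := tsum_congr fun k => ENNReal.tsum_mul_left.symm
        _ = ∑' p : ℕ × ℕ, a p.1 * b p.2 :=
            (ENNReal.tsum_prod (f := fun k j => a k * b j)).symm
    have φinj : Function.Injective (fun p : ℕ × ℕ => (p.1 + p.2, p.1)) := by
      intro p q h
      simp only [Prod.mk.injEq] at h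
      obtain ⟨h1, h2⟩ := h
      exact Prod.ext h2 (by omega)
    have step2 : ∑' p : ℕ × ℕ, a p.1 * b p.2 ≤ ∑' q : ℕ × ℕ, G q := by
      have : ∀ p : ℕ × ℕ, a p.1 * b p.2 = G (p.1 + p.2, p.1) := by
        intro p
        simp [hG]
      rw [tsum_congr this]
      exact ENNReal.tsum_comp_le_tsum_of_injective φinj G
    have step3 : ∑' q : ℕ × ℕ, G q
        = ∑' n : ℕ, ∑ k ∈ Finset.range (n+1), a k * b (n-k) := by
      rw [ENNReal.tsum_prod']
      refine tsum_congr fun n => ?_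
      have hzero : ∀ k ∉ Finset.range (n+1), G (n, k) = 0 := by
        intro k hk
        have : ¬ k ≤ n := by
          simpa [Finset.mem_range, Nat.lt_succ_iff] using hk
        simp [hG, this]
      rw [tsum_eq_sum hzero]
      exact Finset.sum_congr rfl fun k hk => by
        simp [hG, Nat.lt_succ_iff.mp (Finset.mem_range.mp hk)]
    have step4 : ∀ n : ℕ, (∑ k ∈ Finset.range (n+1), a k * b (n-k))
        ≤ s ^ (n+1) * useq H g m (n+1) := by
      intro n
      have h1 : ∀ k ∈ Finset.range (n+1),
          a k * b (n-k) = s ^ (n+1) * (m * dseq H g (k+1) * useq H g m (n-k)) := by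
        intro k hk
        have hkn : k ≤ n := Nat.lt_succ_iff.mp (Finset.mem_range.mp hk)
        have hpow : s ^ (k+1) * s ^ (n-k) = s ^ (n+1) := by
          rw [← pow_add]
          congr 1
          omega
        calc a k * b (n-k) = (s ^ (k+1) * s ^ (n-k)) * (m * dseq H g (k+1) * useq H g m (n-k)) := by
              simp only [ha, hb]; ring
          _ = s ^ (n+1) * (m * dseq H g (k+1) * useq H g m (n-k)) := by rw [hpow]
      rw [Finset.sum_congr rfl h1, ← Finset.mul_sum]
      exact mul_le_mul' le_rfl (useq_lower H g m n)
    calc (∑' k, a k) * (∑' j, b j) = ∑' p : ℕ × ℕ, a p.1 * b p.2 := step1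
      _ ≤ ∑' q : ℕ × ℕ, G q := step2
      _ = ∑' n : ℕ, ∑ k ∈ Finset.range (n+1), a k * b (n-k) := step3
      _ ≤ ∑' n : ℕ, s ^ (n+1) * useq H g m (n+1) := ENNReal.tsum_le_tsum step4
  have hmf : ∑' k, a k = m * fgen H g s := by
    rw [fgen, ← ENNReal.tsum_mul_left]
    exact tsum_congr fun k => by simp only [ha]; ring
  have hbU : (∑' j, b j) = U := rfl
  have hfinal : 1 + U ≤ U := by
    have h2 : U ≤ (∑' k, a k) * (∑' j, b j) := by
      rw [hmf, hbU]
      calc U = 1 * U := (one_mul U).symm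
        _ ≤ (m * fgen H g s) * U := mul_le_mul' hfs le_rfl
    calc 1 + U ≤ 1 + ∑' n : ℕ, s ^ (n+1) * useq H g m (n+1) :=
          add_le_add le_rfl (h2.trans hab)
      _ = s ^ 0 * useq H g m 0 + ∑' n : ℕ, s ^ (n+1) * useq H g m (n+1) := by
          rw [useq_zero H g m hg]; simp
      _ = U := hsplit.symm
  exact absurd ((ENNReal.lt_add_right hU' one_ne_zero).trans_le
    (by rwa [add_comm] at hfinal)) (lt_irrefl U)

theorem lf_resolvent_divergence
    (H : ℕ → ℕ → ℝ≥0∞) (g : ℕ → ℝ≥0∞) (m : ℝ≥0∞)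
    (hH : ∀ i, ∑' j, H i j ≤ 1) (hg : ∑' j, g j = 1) (hm : 0 < m) (hm' : m ≠ ⊤)
    (hrows : ∀ i, ∃ j, 0 < H i j)
    (hph : ∀ j, ∃ n : ℕ, 0 < ∑' i, g i * matpow H n i j)
    (s : ℝ≥0∞) (hs : 0 < s) (hs' : s ≠ ⊤) (hfs : 1 ≤ m * fgen H g s) :
    ∀ i j, (∑' n : ℕ, s ^ n * matpow (meanM H g m) n i j) = ⊤ := by
  intro i0 j0
  set M : ℕ → ℕ → ℝ≥0∞ := meanM H g m with hMdef
  set c : ℕ → ℝ≥0∞ := fun k => ∑' l, H k l with hcdef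
  have hc : ∀ k, 0 < c k := by
    intro k
    obtain ⟨j, hj⟩ := hrows k
    exact lt_of_lt_of_le hj (ENNReal.le_tsum j)
  have hHM : ∀ i j, H i j ≤ M i j := fun i j => le_self_add
  have hMH : ∀ n i j, matpow H n i j ≤ matpow M n i j := fun n => matpow_mono hHM n
  have hm2 : ∀ i j, m * c i * g j ≤ M i j := fun i j => le_add_self
  -- Step A: the total series diverges
  have hUtop := U_top H g m hg s hfs
  have hTail : ∑' n : ℕ, s ^ (n+1) * useq H g m (n+1) = ⊤ := by
    have hs0 : s ^ 0 * useq H g m 0 = 1 := by rw [useq_zero H g m hg]; simp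
    rw [tsum_eq_zero_add' ENNReal.summable, hs0] at hUtop
    rcases ENNReal.add_eq_top.mp hUtop with h | h
    · exact absurd h ENNReal.one_ne_top
    · exact h
  -- w n = g M^n c
  set w : ℕ → ℝ≥0∞ := fun n => ∑' i, g i * ∑' k, matpow M n i k * c k with hwdef
  have hrowM : ∀ k, (∑' j, matpow M 1 k j) = (1 + m) * c k := by
    intro k
    have h1 : (∑' j, matpow M 1 k j) = ∑' j, (H k j + m * c k * g j) :=
      tsum_congr fun j => by rw [matpow_one]; rfl
    rw [h1, ENNReal.tsum_add, ENNReal.tsum_mul_left, hg]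
    ring
  have h_v_w : ∀ n i, vseq H g m (n+1) i = (1 + m) * ∑' k, matpow M n i k * c k := by
    intro n i
    calc vseq H g m (n+1) i = ∑' j, matpow M (n+1) i j := rfl
      _ = ∑' j, ∑' k, matpow M n i k * matpow M 1 k j :=
          tsum_congr fun j => matpow_add M n 1 i j
      _ = ∑' k, ∑' j, matpow M n i k * matpow M 1 k j := ENNReal.tsum_comm
      _ = ∑' k, matpow M n i k * ∑' j, matpow M 1 k j :=
          tsum_congr fun k => ENNReal.tsum_mul_left
      _ = ∑' k, matpow M n i k * ((1 + m) * c k) :=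
          tsum_congr fun k => by rw [hrowM k]
      _ = ∑' k, (1 + m) * (matpow M n i k * c k) := tsum_congr fun k => by ring
      _ = (1 + m) * ∑' k, matpow M n i k * c k := ENNReal.tsum_mul_left
  have h_u_w : ∀ n, useq H g m (n+1) = (1 + m) * w n := by
    intro n
    calc useq H g m (n+1) = ∑' i, g i * vseq H g m (n+1) i := rfl
      _ = ∑' i, (1 + m) * (g i * ∑' k, matpow M n i k * c k) :=
          tsum_congr fun i => by rw [h_v_w n i]; ring
      _ = (1 + m) * w n := ENNReal.tsum_mul_left
  have h1m : (1 : ℝ≥0∞) + m ≠ ⊤ := by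
    simp [ENNReal.add_eq_top, hm']
  have hWtop : ∑' n : ℕ, s ^ (n+1) * w n = ⊤ := by
    by_contra hW
    have heq : (1 + m) * ∑' n : ℕ, s ^ (n+1) * w n
        = ∑' n : ℕ, s ^ (n+1) * useq H g m (n+1) := by
      rw [← ENNReal.tsum_mul_left]
      exact tsum_congr fun n => by rw [h_u_w n]; ring
    rw [hTail] at heq
    exact absurd heq (ENNReal.mul_ne_top h1m hW)
  -- phantom hypothesis at j0
  obtain ⟨r, hα⟩ := hph j0
  set α : ℝ≥0∞ := ∑' i, g i * matpow H r i j0 with hαdef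
  have hM1r : ∀ k, m * c k * α ≤ matpow M (1+r) k j0 := by
    intro k
    calc m * c k * α = ∑' l, m * c k * (g l * matpow H r l j0) := by
          rw [ENNReal.tsum_mul_left]
      _ = ∑' l, (m * c k * g l) * matpow H r l j0 := tsum_congr fun l => by ring
      _ ≤ ∑' l, M k l * matpow M r l j0 :=
          ENNReal.tsum_le_tsum fun l => mul_le_mul' (hm2 k l) (hMH r l j0)
      _ = ∑' l, matpow M 1 k l * matpow M r l j0 :=
          tsum_congr fun l => by rw [matpow_one]
      _ = matpow M (1+r) k j0 := (matpow_add M 1 r k j0).symm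
  have hgMn : ∀ n, m * α * w n ≤ ∑' i, g i * matpow M (n+(1+r)) i j0 := by
    intro n
    have hstep : ∀ i, m * α * ∑' k, matpow M n i k * c k ≤ matpow M (n+(1+r)) i j0 := by
      intro i
      calc m * α * ∑' k, matpow M n i k * c k
          = ∑' k, m * α * (matpow M n i k * c k) := by rw [ENNReal.tsum_mul_left]
        _ = ∑' k, matpow M n i k * (m * c k * α) := tsum_congr fun k => by ring
        _ ≤ ∑' k, matpow M n i k * matpow M (1+r) k j0 :=
            ENNReal.tsum_le_tsum fun k => mul_le_mul' le_rfl (hM1r k)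
        _ = matpow M (n+(1+r)) i j0 := (matpow_add M n (1+r) i j0).symm
    calc m * α * w n = ∑' i, m * α * (g i * ∑' k, matpow M n i k * c k) := by
          rw [ENNReal.tsum_mul_left]
      _ = ∑' i, g i * (m * α * ∑' k, matpow M n i k * c k) := tsum_congr fun i => by ring
      _ ≤ ∑' i, g i * matpow M (n+(1+r)) i j0 :=
          ENNReal.tsum_le_tsum fun i => mul_le_mul' le_rfl (hstep i)
  set gM : ℕ → ℝ≥0∞ := fun n => ∑' i, g i * matpow M n i j0 with hgMdef
  have hne1 : s ^ r * (m * α) ≠ 0 :=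
    mul_ne_zero (pow_ne_zero r hs.ne') (mul_ne_zero hm.ne' hα.ne')
  have hgMtop : ∑' n : ℕ, s ^ n * gM n = ⊤ := by
    refine top_le_iff.mp ?_
    calc (⊤ : ℝ≥0∞) = (s ^ r * (m * α)) * ∑' n : ℕ, s ^ (n+1) * w n := by
          rw [hWtop, ENNReal.mul_top hne1]
      _ = ∑' n : ℕ, (s ^ r * (m * α)) * (s ^ (n+1) * w n) := ENNReal.tsum_mul_left.symm
      _ ≤ ∑' n : ℕ, s ^ (n+(1+r)) * gM (n+(1+r)) := by
          refine ENNReal.tsum_le_tsum fun n => ?_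
          have hp : s ^ (n+(1+r)) = s ^ (n+1) * s ^ r := by
            rw [← pow_add]
            congr 1
            omega
          have heq : (s ^ r * (m * α)) * (s ^ (n+1) * w n)
              = s ^ (n+(1+r)) * (m * α * w n) := by rw [hp]; ring
          rw [heq]
          exact mul_le_mul' le_rfl (hgMn n)
      _ ≤ ∑' n : ℕ, s ^ n * gM n :=
          ENNReal.tsum_comp_le_tsum_of_injective (add_left_injective (1+r))
            (fun n => s ^ n * gM n)
  -- final transfer to (i0, j0)
  have hMstep : ∀ n, m * c i0 * gM n ≤ matpow M (n+1) i0 j0 := by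
    intro n
    calc m * c i0 * gM n = ∑' k, m * c i0 * (g k * matpow M n k j0) := by
          rw [ENNReal.tsum_mul_left]
      _ = ∑' k, (m * c i0 * g k) * matpow M n k j0 := tsum_congr fun k => by ring
      _ ≤ ∑' k, M i0 k * matpow M n k j0 :=
          ENNReal.tsum_le_tsum fun k => mul_le_mul' (hm2 i0 k) le_rfl
      _ = matpow M (n+1) i0 j0 := (matpow_succ M n i0 j0).symm
  have hne2 : s * (m * c i0) ≠ 0 :=
    mul_ne_zero hs.ne' (mul_ne_zero hm.ne' (hc i0).ne')
  refine top_le_iff.mp ?_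
  calc (⊤ : ℝ≥0∞) = (s * (m * c i0)) * ∑' n : ℕ, s ^ n * gM n := by
        rw [hgMtop, ENNReal.mul_top hne2]
    _ = ∑' n : ℕ, (s * (m * c i0)) * (s ^ n * gM n) := ENNReal.tsum_mul_left.symm
    _ ≤ ∑' n : ℕ, s ^ (n+1) * matpow M (n+1) i0 j0 := by
        refine ENNReal.tsum_le_tsum fun n => ?_
        have heq : (s * (m * c i0)) * (s ^ n * gM n)
            = s ^ (n+1) * (m * c i0 * gM n) := by rw [pow_succ]; ring
        rw [heq]
        exact mul_le_mul' le_rfl (hMstep n)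
    _ ≤ ∑' n : ℕ, s ^ n * matpow M n i0 j0 :=
        ENNReal.tsum_comp_le_tsum_of_injective (add_left_injective 1)
          (fun n => s ^ n * matpow M n i0 j0)
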